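/- Let G be a Borel probability measure on the unit sphere S = {z ∈ ℝ^N : |z| = 1}, let ε > 0 and 0 < γ < 1, and define U = { z¹ ∈ S : G{ z² : z¹·z² ≤ −ε } ≥ γ }. Then G(U) ≤ 2(1 − γ)/ε. -/

import Mathlib

open MeasureTheory
open scoped RealInnerProductSpace

/-- If `U` is the set of points `z¹` on the sphere such that
`G{z² : z¹·z² ≤ −ε} ≥ γ`, then `G(U) ≤ 2(1−γ)/ε`. -/
theorem measure_bad_set_le (N : ℕ) (hN : 1 ≤ N)
    (G : Measure (EuclideanSpace ℝ (Fin N))) [IsProbabilityMeasure G]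
    (hG : G (Metric.sphere (0 : EuclideanSpace ℝ (Fin N)) 1)ᶜ = 0)
    (ε γ : ℝ) (hε : 0 < ε) (hγ0 : 0 < γ) (hγ1 : γ < 1) :
    (G {z1 : EuclideanSpace ℝ (Fin N) | z1 ∈ Metric.sphere (0 : EuclideanSpace ℝ (Fin N)) 1 ∧
        ENNReal.ofReal γ ≤ G {z2 : EuclideanSpace ℝ (Fin N) | ⟪z1, z2⟫ ≤ -ε}}).toReal ≤
      2 * (1 - γ) / ε := by
  classical
  set S := Metric.sphere (0 : EuclideanSpace ℝ (Fin N)) 1 with hSdef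
  set U := {z1 : EuclideanSpace ℝ (Fin N) | z1 ∈ S ∧
      ENNReal.ofReal γ ≤ G {z2 : EuclideanSpace ℝ (Fin N) | ⟪z1, z2⟫ ≤ -ε}} with hUdef
  have hRHSpos : (0:ℝ) ≤ 2 * (1 - γ) / ε := by
    apply div_nonneg _ hε.le
    linarith
  -- ε > 1 case: U is empty
  rcases le_or_gt ε 1 with hε1 | hε1
  swap
  · have hUempty : U = ∅ := by
      ext z1
      simp only [Set.mem_empty_iff_false, iff_false]
      rintro ⟨hz1S, hz1γ⟩
      have hsub : {z2 : EuclideanSpace ℝ (Fin N) | ⟪z1, z2⟫ ≤ -ε} ⊆ Sᶜ := by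
        intro z2 hz2
        simp only [Set.mem_compl_iff]
        intro hz2S
        have h1 : ‖z1‖ = 1 := by simpa using mem_sphere_zero_iff_norm.mp hz1S
        have h2 : ‖z2‖ = 1 := by simpa using mem_sphere_zero_iff_norm.mp hz2S
        have habs := abs_real_inner_le_norm z1 z2
        rw [h1, h2, one_mul] at habs
        have hlow := (abs_le.mp habs).1
        have hle : (⟪z1, z2⟫:ℝ) ≤ -ε := hz2
        linarith
      have hz : G {z2 : EuclideanSpace ℝ (Fin N) | ⟪z1, z2⟫ ≤ -ε} = 0 :=
        le_antisymm (le_trans (measure_mono hsub) hG.le) (zero_le)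
      rw [hz, nonpos_iff_eq_zero, ENNReal.ofReal_eq_zero] at hz1γ
      linarith
    rw [hUempty]
    simpa using hRHSpos
  -- main case ε ≤ 1
  -- measurability
  have hSm : MeasurableSet S := Metric.isClosed_sphere.measurableSet
  have hmeas : Measurable fun z1 : EuclideanSpace ℝ (Fin N) =>
      G {z2 : EuclideanSpace ℝ (Fin N) | ⟪z1, z2⟫ ≤ -ε} := by
    have hclosed : MeasurableSet {p : EuclideanSpace ℝ (Fin N) × EuclideanSpace ℝ (Fin N) |
        ⟪p.1, p.2⟫ ≤ -ε} :=
      (isClosed_le (continuous_fst.inner continuous_snd) continuous_const).measurableSet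
    exact measurable_measure_prodMk_left (ν := G) hclosed
  have hUm : MeasurableSet U := by
    have : U = S ∩ (fun z1 => G {z2 : EuclideanSpace ℝ (Fin N) | ⟪z1, z2⟫ ≤ -ε}) ⁻¹'
        Set.Ici (ENNReal.ofReal γ) := rfl
    rw [this]
    exact hSm.inter (hmeas measurableSet_Ici)
  -- a.e. on sphere
  have hSae : ∀ᵐ z ∂G, z ∈ S := by
    rw [ae_iff]
    simpa [Set.compl_def] using hG
  have hSaeU : ∀ᵐ z ∂(G.restrict U), z ∈ S := ae_restrict_of_ae hSae
  have hnormU : ∀ᵐ z ∂(G.restrict U), ‖z‖ = 1 := by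
    filter_upwards [hSaeU] with z hz
    simpa using mem_sphere_zero_iff_norm.mp hz
  -- integrability of the identity on U
  have hid_int : Integrable (fun z : EuclideanSpace ℝ (Fin N) => z) (G.restrict U) := by
    refine Integrable.mono' (integrable_const (1:ℝ)) measurable_id.aestronglyMeasurable ?_
    filter_upwards [hnormU] with z hz
    simp [hz]
  set b := ∫ z in U, z ∂G with hbdef
  set u := (G U).toReal with hudef
  have hu0 : 0 ≤ u := ENNReal.toReal_nonneg
  have hGUfin : G U ≠ ⊤ := (measure_lt_top G U).ne
  set K := (1 + ε) * (1 - γ) - ε * u with hKdef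
  -- pointwise bound
  have hpt : ∀ z1 ∈ U, ∫ z2 in U, (⟪z1, z2⟫:ℝ) ∂G ≤ K := by
    intro z1 hz1
    obtain ⟨hz1S, hz1γ⟩ := hz1
    have hz1n : ‖z1‖ = 1 := by simpa using mem_sphere_zero_iff_norm.mp hz1S
    set C := {z2 : EuclideanSpace ℝ (Fin N) | ⟪z1, z2⟫ ≤ -ε} with hCdef
    have hCm : MeasurableSet C :=
      (isClosed_le (continuous_const.inner continuous_id) continuous_const).measurableSet
    have hf_int : Integrable (fun z2 => (⟪z1, z2⟫:ℝ)) (G.restrict U) := by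
      refine Integrable.mono' (integrable_const (1:ℝ))
        ((continuous_const.inner continuous_id).aestronglyMeasurable) ?_
      filter_upwards [hnormU] with z2 hz2
      rw [Real.norm_eq_abs]
      calc |(⟪z1, z2⟫:ℝ)| ≤ ‖z1‖ * ‖z2‖ := abs_real_inner_le_norm z1 z2
      _ = 1 := by rw [hz1n, hz2]; ring
    have hsplit : (∫ z2 in C, (⟪z1, z2⟫:ℝ) ∂(G.restrict U)) +
        (∫ z2 in Cᶜ, (⟪z1, z2⟫:ℝ) ∂(G.restrict U)) = ∫ z2 in U, (⟪z1, z2⟫:ℝ) ∂G :=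
      integral_add_compl hCm hf_int
    set c := ((G.restrict U) C).toReal with hcdef
    set d := ((G.restrict U) Cᶜ).toReal with hddef
    have hfin1 : (G.restrict U) C ≠ ⊤ := (measure_lt_top _ _).ne
    have hfin2 : (G.restrict U) Cᶜ ≠ ⊤ := (measure_lt_top _ _).ne
    have hcd : c + d = u := by
      rw [hcdef, hddef, ← ENNReal.toReal_add hfin1 hfin2, measure_add_measure_compl hCm]
      simp [hudef]
    have hc0 : 0 ≤ c := ENNReal.toReal_nonneg
    have hd0 : 0 ≤ d := ENNReal.toReal_nonneg
    -- d ≤ 1 - γ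
    have hdle : d ≤ 1 - γ := by
      have h1 : (G.restrict U) Cᶜ ≤ G Cᶜ := by
        rw [Measure.restrict_apply hCm.compl]
        exact measure_mono Set.inter_subset_left
      have h2 : G Cᶜ = 1 - G C := prob_compl_eq_one_sub hCm
      have h3 : G Cᶜ ≤ 1 - ENNReal.ofReal γ := by
        rw [h2]; exact tsub_le_tsub_left hz1γ 1
      have h4 : (1 : ENNReal) - ENNReal.ofReal γ = ENNReal.ofReal (1 - γ) := by
        rw [ENNReal.ofReal_sub _ hγ0.le, ENNReal.ofReal_one]
      exact ENNReal.toReal_le_of_le_ofReal (by linarith) (h4 ▸ (h1.trans h3))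
    -- integral over C
    have hIC : ∫ z2 in C, (⟪z1, z2⟫:ℝ) ∂(G.restrict U) ≤ -ε * c := by
      have := setIntegral_mono_on (μ := G.restrict U) hf_int.integrableOn
        (integrable_const (-ε)).integrableOn hCm (fun z2 hz2 => hz2)
      calc ∫ z2 in C, (⟪z1, z2⟫:ℝ) ∂(G.restrict U)
          ≤ ∫ _ in C, (-ε) ∂(G.restrict U) := this
        _ = -ε * c := by rw [setIntegral_const]; rw [smul_eq_mul, measureReal_def]; ring
    -- integral over Cᶜ
    have hICc : ∫ z2 in Cᶜ, (⟪z1, z2⟫:ℝ) ∂(G.restrict U) ≤ d := by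
      have hb : ∀ᵐ z2 ∂((G.restrict U).restrict Cᶜ), (⟪z1, z2⟫:ℝ) ≤ 1 := by
        filter_upwards [ae_restrict_of_ae hnormU] with z2 hz2
        calc (⟪z1, z2⟫:ℝ) ≤ |(⟪z1, z2⟫:ℝ)| := le_abs_self _
          _ ≤ ‖z1‖ * ‖z2‖ := abs_real_inner_le_norm z1 z2
          _ = 1 := by rw [hz1n, hz2]; ring
      calc ∫ z2 in Cᶜ, (⟪z1, z2⟫:ℝ) ∂(G.restrict U)
          ≤ ∫ _ in Cᶜ, (1:ℝ) ∂(G.restrict U) :=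
            integral_mono_ae hf_int.restrict (integrable_const 1) hb
        _ = d := by rw [setIntegral_const]; rw [smul_eq_mul, measureReal_def]; ring
    have : ∫ z2 in U, (⟪z1, z2⟫:ℝ) ∂G ≤ -ε * c + d := by
      rw [← hsplit]; exact add_le_add hIC hICc
    have hK : -ε * c + d ≤ K := by
      rw [hKdef]
      have : c = u - d := by linarith
      rw [this]
      nlinarith
    linarith
  -- b·b = ∫_U ⟪z1,b⟫
  have h1 : (⟪b, b⟫:ℝ) = ∫ z1 in U, (⟪z1, b⟫:ℝ) ∂G := by
    have e1 := integral_inner (𝕜 := ℝ) hid_int b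
    rw [← hbdef] at e1
    rw [← e1]
    exact (integral_congr_ae (Filter.Eventually.of_forall fun x => real_inner_comm b x)).symm
  have h2 : ∀ z1, (⟪z1, b⟫:ℝ) = ∫ z2 in U, (⟪z1, z2⟫:ℝ) ∂G := by
    intro z1
    have e2 := integral_inner (𝕜 := ℝ) hid_int z1
    rw [← hbdef] at e2
    exact e2.symm
  have hb_int : Integrable (fun z1 => (⟪z1, b⟫:ℝ)) (G.restrict U) := by
    refine Integrable.mono' (integrable_const ‖b‖)
      ((continuous_id.inner continuous_const).aestronglyMeasurable) ?_
    filter_upwards [hnormU] with z1 hz1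
    rw [Real.norm_eq_abs]
    calc |(⟪z1, b⟫:ℝ)| ≤ ‖z1‖ * ‖b‖ := abs_real_inner_le_norm z1 b
      _ = ‖b‖ := by rw [hz1]; ring
  have hmain : (⟪b, b⟫:ℝ) ≤ K * u := by
    rw [h1]
    calc ∫ z1 in U, (⟪z1, b⟫:ℝ) ∂G ≤ ∫ _ in U, K ∂G := by
          refine setIntegral_mono_on hb_int (integrable_const K) hUm (fun z1 hz1 => ?_)
          rw [h2 z1]
          exact hpt z1 hz1
      _ = K * u := by rw [setIntegral_const]; rw [smul_eq_mul, hudef, measureReal_def]; ring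
  have h0 : (0:ℝ) ≤ ⟪b, b⟫ := real_inner_self_nonneg
  have hKu : 0 ≤ K * u := le_trans h0 hmain
  rcases hu0.eq_or_lt with h | h
  · rw [← h]; exact hRHSpos
  · have hKpos : 0 ≤ K := by
      by_contra hneg
      push_neg at hneg
      nlinarith
    rw [le_div_iff₀ hε]
    rw [hKdef] at hKpos
    nlinarith
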